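/- Let A ∈ ℂ^{n×n}, B ∈ ℂ^{n×m}, C ∈ ℂ^{m×n}, D ∈ ℂ^{m×m}, let X₀ ∈ ℂ^{n×n} be Hermitian with W_c(X₀) ≻ 0, and write W_c(X₀) = [[Q₀, C₀ᴴ],[C₀, R₀]]. Set A_F := A − B R₀⁻¹ C₀, P₀ := Q₀ − C₀ᴴR₀⁻¹C₀ (so P₀ ≻ 0 and R₀ ≻ 0), B̂ := P₀^{1/2}B, Â_F := P₀^{1/2} A_F P₀^{−1/2}, and for a Hermitian Δ ∈ ℂ^{n×n} let Δ̂ := P₀^{−1/2} Δ P₀^{−1/2}. Then det W_c(X₀ + Δ) = det W_c(X₀) · det( I_n − Δ̂ Â_F − Â_Fᴴ Δ̂ − Δ̂ B̂ R₀⁻¹ B̂ᴴ Δ̂ ). -/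

import Mathlib

open Matrix
open scoped ComplexOrder

/-- The square root of a positive semidefinite matrix, as defined in Mathlib (Dec 2024);
removed from current Mathlib, restored here with its old definition. -/
noncomputable def Matrix.PosSemidef.sqrt {n 𝕜 : Type*} [RCLike 𝕜] [Fintype n] [DecidableEq n]
    {A : Matrix n n 𝕜} (hA : A.PosSemidef) : Matrix n n 𝕜 :=
  hA.1.eigenvectorUnitary.1 * diagonal ((↑) ∘ (√·) ∘ hA.1.eigenvalues) *
    (star hA.1.eigenvectorUnitary : Matrix n n 𝕜)

theorem Matrix.PosSemidef.isHermitian_sqrt {n 𝕜 : Type*} [RCLike 𝕜] [Fintype n] [DecidableEq n]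
    {A : Matrix n n 𝕜} (hA : A.PosSemidef) : hA.sqrt.IsHermitian := by
  have hd : (diagonal ((↑) ∘ (√·) ∘ hA.1.eigenvalues) : Matrix n n 𝕜)ᴴ =
      diagonal ((↑) ∘ (√·) ∘ hA.1.eigenvalues) := by
    rw [diagonal_conjTranspose]
    congr 1
    funext i
    simp
  rw [IsHermitian, Matrix.PosSemidef.sqrt, conjTranspose_mul, conjTranspose_mul, hd,
    star_eq_conjTranspose, conjTranspose_conjTranspose, Matrix.mul_assoc]

theorem Matrix.PosSemidef.sqrt_mul_self {n 𝕜 : Type*} [RCLike 𝕜] [Fintype n] [DecidableEq n]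
    {A : Matrix n n 𝕜} (hA : A.PosSemidef) : hA.sqrt * hA.sqrt = A := by
  conv_rhs => rw [hA.1.spectral_theorem]
  rw [Unitary.conjStarAlgAut_apply]
  simp only [Matrix.PosSemidef.sqrt, Matrix.mul_assoc]
  rw [← Matrix.mul_assoc (star _ : Matrix n n 𝕜) hA.1.eigenvectorUnitary.1, Unitary.coe_star_mul_self,
    Matrix.one_mul]
  congr 1
  rw [← Matrix.mul_assoc, diagonal_mul_diagonal]
  congr 2
  funext i
  simp only [Function.comp_apply]
  rw [← RCLike.ofReal_mul, Real.mul_self_sqrt (hA.eigenvalues_nonneg i)]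

/-- reformulation of the determinant of the incremented LMI:
`det W_c(X₀ + Δ) = det W_c(X₀) · det(I − Δ̂ Â_F − Â_Fᴴ Δ̂ − Δ̂ B̂ R₀⁻¹ B̂ᴴ Δ̂)`,
where `Â_F = P₀^{1/2} A_F P₀^{−1/2}`, `B̂ = P₀^{1/2} B`, `Δ̂ = P₀^{−1/2} Δ P₀^{−1/2}`. -/
theorem det_Wc_increment_formula {n m : ℕ}
    (A : Matrix (Fin n) (Fin n) ℂ) (B : Matrix (Fin n) (Fin m) ℂ)
    (C : Matrix (Fin m) (Fin n) ℂ) (D : Matrix (Fin m) (Fin m) ℂ)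
    (X₀ : Matrix (Fin n) (Fin n) ℂ) (hX₀ : X₀.IsHermitian)
    (hW : (fromBlocks (-(X₀ * A) - Aᴴ * X₀) (Cᴴ - X₀ * B) (C - Bᴴ * X₀) (D + Dᴴ)).PosDef)
    (Q₀ : Matrix (Fin n) (Fin n) ℂ) (hQ₀ : Q₀ = -(X₀ * A) - Aᴴ * X₀)
    (C₀ : Matrix (Fin m) (Fin n) ℂ) (hC₀ : C₀ = C - Bᴴ * X₀)
    (R₀ : Matrix (Fin m) (Fin m) ℂ) (hR₀ : R₀ = D + Dᴴ) (hR₀pd : R₀.PosDef)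
    (AF : Matrix (Fin n) (Fin n) ℂ) (hAF : AF = A - B * R₀⁻¹ * C₀)
    (P₀ : Matrix (Fin n) (Fin n) ℂ) (hP₀def : P₀ = Q₀ - C₀ᴴ * R₀⁻¹ * C₀)
    (hP₀ : P₀.PosDef)
    (Δ : Matrix (Fin n) (Fin n) ℂ) (hΔ : Δ.IsHermitian) :
    (fromBlocks (-((X₀ + Δ) * A) - Aᴴ * (X₀ + Δ)) (Cᴴ - (X₀ + Δ) * B)
        (C - Bᴴ * (X₀ + Δ)) (D + Dᴴ)).det =
      (fromBlocks (-(X₀ * A) - Aᴴ * X₀) (Cᴴ - X₀ * B) (C - Bᴴ * X₀) (D + Dᴴ)).det *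
        (1 - ((hP₀.posSemidef.sqrt)⁻¹ * Δ * (hP₀.posSemidef.sqrt)⁻¹) *
              (hP₀.posSemidef.sqrt * AF * (hP₀.posSemidef.sqrt)⁻¹)
           - (hP₀.posSemidef.sqrt * AF * (hP₀.posSemidef.sqrt)⁻¹)ᴴ *
              ((hP₀.posSemidef.sqrt)⁻¹ * Δ * (hP₀.posSemidef.sqrt)⁻¹)
           - ((hP₀.posSemidef.sqrt)⁻¹ * Δ * (hP₀.posSemidef.sqrt)⁻¹) *
              (hP₀.posSemidef.sqrt * B) * R₀⁻¹ * (hP₀.posSemidef.sqrt * B)ᴴ *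
              ((hP₀.posSemidef.sqrt)⁻¹ * Δ * (hP₀.posSemidef.sqrt)⁻¹)).det := by
  set S := hP₀.posSemidef.sqrt with hSdef
  have hSh : Sᴴ = S := hP₀.posSemidef.isHermitian_sqrt
  have hSS : S * S = P₀ := hP₀.posSemidef.sqrt_mul_self
  have hdetP₀ : P₀.det ≠ 0 := hP₀.det_pos.ne'
  have hdetS : S.det ≠ 0 := by
    intro h
    apply hdetP₀
    rw [← hSS, det_mul, h, mul_zero]
  have hSinv : S⁻¹ * S = 1 := nonsing_inv_mul S (isUnit_iff_ne_zero.2 hdetS)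
  have hSinv' : S * S⁻¹ = 1 := mul_nonsing_inv S (isUnit_iff_ne_zero.2 hdetS)
  have hSinvh : (S⁻¹)ᴴ = S⁻¹ := by rw [conjTranspose_nonsing_inv, hSh]
  have hRinvh : (R₀⁻¹)ᴴ = R₀⁻¹ := by rw [conjTranspose_nonsing_inv, hR₀pd.1]
  have hX₀h : X₀ᴴ = X₀ := hX₀
  have hΔh : Δᴴ = Δ := hΔ
  haveI hIDD : Invertible (D + Dᴴ) :=
    invertibleOfIsUnitDet _ (by rw [← hR₀]; exact isUnit_iff_ne_zero.2 hR₀pd.det_pos.ne')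
  have hRinv : (⅟(D + Dᴴ) : Matrix (Fin m) (Fin m) ℂ) = R₀⁻¹ := by
    rw [invOf_eq_nonsing_inv, hR₀]
  have hC₀h : C₀ᴴ = Cᴴ - X₀ * B := by
    rw [hC₀, conjTranspose_sub, conjTranspose_mul, conjTranspose_conjTranspose, hX₀h]
  have hAFh : AFᴴ = Aᴴ - C₀ᴴ * R₀⁻¹ * Bᴴ := by
    rw [hAF]
    simp [Matrix.conjTranspose_sub, Matrix.conjTranspose_mul, hRinvh, Matrix.mul_assoc]
  -- Schur of incremented
  have hM : -((X₀ + Δ) * A) - Aᴴ * (X₀ + Δ) - (Cᴴ - (X₀ + Δ) * B) * R₀⁻¹ * (C - Bᴴ * (X₀ + Δ))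
      = P₀ - Δ * AF - AFᴴ * Δ - Δ * B * R₀⁻¹ * Bᴴ * Δ := by
    rw [hP₀def, hQ₀, hAFh, hAF, hC₀h, hC₀]
    simp only [Matrix.add_mul, Matrix.mul_add, Matrix.sub_mul, Matrix.mul_sub,
      Matrix.conjTranspose_add, Matrix.conjTranspose_mul, Matrix.conjTranspose_sub,
      Matrix.conjTranspose_conjTranspose, hX₀h, hΔh, Matrix.mul_assoc]
    abel
  have hM0 : -(X₀ * A) - Aᴴ * X₀ - (Cᴴ - X₀ * B) * R₀⁻¹ * (C - Bᴴ * X₀) = P₀ := by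
    rw [hP₀def, hQ₀, hC₀h, hC₀]
  have h1 : (fromBlocks (-((X₀ + Δ) * A) - Aᴴ * (X₀ + Δ)) (Cᴴ - (X₀ + Δ) * B)
        (C - Bᴴ * (X₀ + Δ)) (D + Dᴴ)).det
      = R₀.det * (P₀ - Δ * AF - AFᴴ * Δ - Δ * B * R₀⁻¹ * Bᴴ * Δ).det := by
    rw [det_fromBlocks₂₂, hRinv, ← hR₀, hM]
  have h0 : (fromBlocks (-(X₀ * A) - Aᴴ * X₀) (Cᴴ - X₀ * B) (C - Bᴴ * X₀) (D + Dᴴ)).det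
      = R₀.det * P₀.det := by
    rw [det_fromBlocks₂₂, hRinv, ← hR₀, hM0]
  -- rewrite the big determinant factor
  have e1 : (S⁻¹ * Δ * S⁻¹) * (S * AF * S⁻¹) = S⁻¹ * (Δ * AF) * S⁻¹ := by
    simp only [Matrix.mul_assoc]
    rw [← Matrix.mul_assoc S⁻¹ S, hSinv, Matrix.one_mul]
  have e2 : (S * AF * S⁻¹)ᴴ * (S⁻¹ * Δ * S⁻¹) = S⁻¹ * (AFᴴ * Δ) * S⁻¹ := by
    simp only [Matrix.conjTranspose_mul, hSinvh, hSh, Matrix.mul_assoc]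
    rw [← Matrix.mul_assoc S S⁻¹, hSinv', Matrix.one_mul]
  have e3 : (S⁻¹ * Δ * S⁻¹) * (S * B) * R₀⁻¹ * (S * B)ᴴ * (S⁻¹ * Δ * S⁻¹)
      = S⁻¹ * (Δ * B * R₀⁻¹ * Bᴴ * Δ) * S⁻¹ := by
    simp only [Matrix.conjTranspose_mul, hSh, Matrix.mul_assoc]
    rw [← Matrix.mul_assoc S⁻¹ S, hSinv, Matrix.one_mul,
      ← Matrix.mul_assoc S S⁻¹, hSinv', Matrix.one_mul]
  have e0 : (1 : Matrix (Fin n) (Fin n) ℂ) = S⁻¹ * P₀ * S⁻¹ := by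
    rw [← hSS, ← Matrix.mul_assoc, Matrix.mul_assoc (S⁻¹ * S), hSinv', Matrix.mul_one,
      hSinv]
  have key : (1 - (S⁻¹ * Δ * S⁻¹) * (S * AF * S⁻¹)
           - (S * AF * S⁻¹)ᴴ * (S⁻¹ * Δ * S⁻¹)
           - (S⁻¹ * Δ * S⁻¹) * (S * B) * R₀⁻¹ * (S * B)ᴴ * (S⁻¹ * Δ * S⁻¹))
      = S⁻¹ * (P₀ - Δ * AF - AFᴴ * Δ - Δ * B * R₀⁻¹ * Bᴴ * Δ) * S⁻¹ := by
    rw [e1, e2, e3]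
    conv_lhs => rw [e0]
    simp only [Matrix.sub_mul, Matrix.mul_sub]
  rw [h1, h0, key]
  have hdetSinv : (S⁻¹).det = S.det⁻¹ := by
    rw [det_nonsing_inv, Ring.inverse_eq_inv']
  rw [det_mul, det_mul, hdetSinv]
  have hP₀S : P₀.det = S.det * S.det := by rw [← hSS, det_mul]
  rw [hP₀S]
  field_simp
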